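/- arXiv:2405.15167 — 3 statements merged into one kernel-verified Lean document; each statement's English description precedes it below -/
import Mathlib

section
/- Let v ∈ ℝ^n and λ > 0 with ‖v‖₁ > λ. Sort the absolute values so that |v_{(1)}| ≥ |v_{(2)}| ≥ ⋯ ≥ |v_{(n)}|, let j* = max{ j : |v_{(j)}| > (Σ_{k=1}^{j} |v_{(k)}| − λ)/j }, and set θ = (Σ_{k=1}^{j*} |v_{(k)}| − λ)/j*. Then the vector w with w_i = sign(v_i)·max(|v_i| − θ, 0) is the unique solution to min_{‖w‖₁ ≤ λ} ½‖v − w‖₂², and satisfies ‖w‖₁ = λ. -/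
open Finset

/-- Duchi et al. (2008) soft-thresholding characterization of the Euclidean
projection onto the ℓ1 ball: with `σ` sorting the absolute values of `v` in
decreasing order, `jmax` the largest (0-based) index `j` with
`|v (σ j)| > (∑_{k ≤ j} |v (σ k)| − λ)/(j+1)`, and
`θ = (∑_{k ≤ jmax} |v (σ k)| − λ)/(jmax+1)`, the soft-thresholded vector
`w i = sign(v i) · max(|v i| − θ, 0)` is the unique solution of
`min_{‖w‖₁ ≤ λ} ½‖v − w‖₂²` and satisfies `‖w‖₁ = λ`. -/
theorem stmt_5 (n : ℕ) (v : Fin n → ℝ) (lam : ℝ) (hlam : 0 < lam)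
    (hv : lam < ∑ i, |v i|)
    (σ : Equiv.Perm (Fin n))
    (hσ : ∀ a b : Fin n, a ≤ b → |v (σ b)| ≤ |v (σ a)|)
    (jmax : Fin n)
    (hjmax : IsGreatest {j : Fin n |
      ((∑ k ∈ Iic j, |v (σ k)|) - lam) / ((j : ℝ) + 1) < |v (σ j)|} jmax)
    (θ : ℝ)
    (hθ : θ = ((∑ k ∈ Iic jmax, |v (σ k)|) - lam) / ((jmax : ℝ) + 1))
    (w : Fin n → ℝ)
    (hw : ∀ i, w i = Real.sign (v i) * max (|v i| - θ) 0) :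
    (∑ i, |w i|) = lam ∧
    (∀ u : Fin n → ℝ, (∑ i, |u i|) ≤ lam →
      (1 / 2) * (∑ i, (v i - w i) ^ 2) ≤ (1 / 2) * (∑ i, (v i - u i) ^ 2)) ∧
    (∀ u : Fin n → ℝ, (∑ i, |u i|) ≤ lam →
      (∑ i, (v i - u i) ^ 2) = (∑ i, (v i - w i) ^ 2) → u = w) := by
  set a : Fin n → ℝ := fun k => |v (σ k)| with ha
  set T : Fin n → ℝ := fun j => ((∑ k ∈ Iic j, a k) - lam) / ((j : ℝ) + 1) with hTdef
  have hθlt : θ < a jmax := by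
    have := hjmax.1
    simpa [hθ] using this
  -- key induction
  have key : ∀ m : ℕ, jmax.val ≤ m → ∀ hm : m < n,
      T ⟨m, hm⟩ ≤ θ ∧ (jmax.val < m → a ⟨m, hm⟩ ≤ θ) := by
    intro m
    induction m with
    | zero =>
      intro hle hm
      have hj : jmax = ⟨0, hm⟩ := Fin.ext (Nat.le_zero.mp hle)
      constructor
      · rw [← hj, hθ]
      · omega
    | succ m ih =>
      intro hle hm
      by_cases hcase : jmax.val = m + 1
      · have hj : jmax = ⟨m + 1, hm⟩ := Fin.ext hcase
        constructor
        · rw [← hj, hθ]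
        · omega
      · have hle' : jmax.val ≤ m := by omega
        have hm' : m < n := by omega
        obtain ⟨hT', _⟩ := ih hle' hm'
        set j : Fin n := ⟨m + 1, hm⟩ with hjdef
        set j' : Fin n := ⟨m, hm'⟩ with hj'def
        have hjgt : jmax < j := by
          rw [Fin.lt_def]; show jmax.val < m + 1; omega
        -- j not in the set
        have hnot : ¬ (T j < a j) := by
          intro hmem
          have : j ≤ jmax := hjmax.2 (by simpa [hTdef, ha] using hmem)
          exact absurd this (not_le.mpr hjgt)
        have haj : a j ≤ T j := not_lt.mp hnot
        have hsplit : (∑ k ∈ Iic j, a k) = (∑ k ∈ Iic j', a k) + a j := by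
          have hins : Iic j = insert j (Iic j') := by
            ext k
            simp only [mem_Iic, mem_insert, Fin.le_def, Fin.ext_iff, hjdef, hj'def, Fin.val_mk]
            omega
          rw [hins, Finset.sum_insert (s := Iic j') (a := j) (by simp [Fin.le_def, hjdef, hj'def]), add_comm]
        set A : ℝ := ∑ k ∈ Iic j', a k with hA
        have hTj : T j = (A - lam + a j) / ((m : ℝ) + 2) := by
          simp only [hTdef, hsplit]
          norm_num [hjdef]
          ring_nf
        have hTj' : T j' = (A - lam) / ((m : ℝ) + 1) := by
          simp [hTdef, hj'def, hA]
        have hm1 : (0:ℝ) < (m : ℝ) + 1 := by positivity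
        have hm2 : (0:ℝ) < (m : ℝ) + 2 := by positivity
        -- from a j ≤ T j deduce a j ≤ T j'
        have h1 : a j ≤ T j' := by
          rw [hTj] at haj
          rw [hTj']
          rw [le_div_iff₀ hm1]
          rw [le_div_iff₀ hm2] at haj
          nlinarith
        have h2 : T j ≤ T j' := by
          rw [hTj, hTj', div_le_div_iff₀ hm2 hm1]
          rw [hTj'] at h1
          rw [le_div_iff₀ hm1] at h1
          nlinarith
        exact ⟨h2.trans hT', fun _ => h1.trans hT'⟩
  have hsmall : ∀ k : Fin n, jmax < k → a k ≤ θ := by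
    intro k hk
    have := (key k.val (le_of_lt hk) k.isLt).2 hk
    simpa using this
  have hbig : ∀ k : Fin n, k ≤ jmax → θ < a k := fun k hk =>
    lt_of_lt_of_le hθlt (hσ k jmax hk)
  have hθ0 : 0 ≤ θ := by
    by_cases hc : jmax.val + 1 < n
    · have := hsmall ⟨jmax.val + 1, hc⟩ (by rw [Fin.lt_def]; simp)
      exact le_trans (abs_nonneg _) this
    · -- jmax is the last index, Iic jmax = univ
      have huniv : Iic jmax = Finset.univ := by
        ext k
        simp only [mem_Iic, mem_univ, iff_true, Fin.le_def]
        have := k.isLt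
        omega
      have hsum : (∑ k ∈ Iic jmax, a k) = ∑ i, |v i| := by
        rw [huniv, ha]
        exact Equiv.sum_comp σ (fun i => |v i|)
      rw [hθ, hsum]
      apply div_nonneg (by linarith) (by positivity)
  have habsw : ∀ i, |w i| = max (|v i| - θ) 0 := by
    intro i
    rw [hw i]
    rcases lt_trichotomy (v i) 0 with h | h | h
    · rw [Real.sign_of_neg h, abs_mul, abs_of_nonneg (le_max_right (|v i| - θ) 0)]
      norm_num
    · simp only [h, Real.sign_zero, zero_mul, abs_zero, zero_sub]
      rw [max_eq_right (by linarith : -θ ≤ (0:ℝ))]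
    · rw [Real.sign_of_pos h, abs_mul, abs_of_nonneg (le_max_right (|v i| - θ) 0)]
      norm_num
  have hcard : (Iic jmax).card = jmax.val + 1 := Fin.card_Iic jmax
  have hsumw : (∑ i, |w i|) = lam := by
    have h1 : (∑ i, |w i|) = ∑ k, max (a k - θ) 0 := by
      rw [← Equiv.sum_comp σ (fun i => |w i|)]
      exact Finset.sum_congr rfl fun k _ => habsw (σ k)
    rw [h1]
    have h2 : (∑ k, max (a k - θ) 0)
        = ∑ k ∈ Iic jmax, max (a k - θ) 0 := by
      symm
      apply Finset.sum_subset (Finset.subset_univ _)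
      intro k _ hk
      have : jmax < k := by
        simp only [mem_Iic] at hk
        exact not_le.mp hk
      have := hsmall k this
      simp [max_eq_right, sub_nonpos.mpr this]
    rw [h2]
    have h3 : (∑ k ∈ Iic jmax, max (a k - θ) 0) = ∑ k ∈ Iic jmax, (a k - θ) :=
      Finset.sum_congr rfl fun k hk =>
        max_eq_left (by have := hbig k (mem_Iic.mp hk); linarith)
    rw [h3, Finset.sum_sub_distrib, Finset.sum_const, hcard, nsmul_eq_mul]
    have hne : ((jmax : ℝ) + 1) ≠ 0 := by positivity
    rw [hθ]
    field_simp
    push_cast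
    ring
  refine ⟨hsumw, ?_, ?_⟩
  all_goals {
    intro u hu
    -- pointwise variational inequality
    have hVIi : ∀ i, (v i - w i) * (u i - w i) ≤ θ * (|u i| - |w i|) := by
      intro i
      by_cases hc : θ < |v i|
      · rcases lt_trichotomy (v i) 0 with h | h | h
        · have hc' : θ < -v i := by rwa [abs_of_neg h] at hc
          have hwv : w i = v i + θ := by
            rw [hw i, Real.sign_of_neg h, abs_of_neg h,
              max_eq_left (by linarith : (0:ℝ) ≤ -v i - θ)]
            ring
          have hwabs : |w i| = -v i - θ := by
            rw [hwv, abs_of_neg (by linarith : v i + θ < 0)]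
            ring
          rw [hwabs, hwv]
          have h2 : θ * (-u i) ≤ θ * |u i| :=
            mul_le_mul_of_nonneg_left (neg_le_abs _) hθ0
          nlinarith [h2]
        · rw [h, abs_zero] at hc; linarith
        · have hc' : θ < v i := by rwa [abs_of_pos h] at hc
          have hwv : w i = v i - θ := by
            rw [hw i, Real.sign_of_pos h, abs_of_pos h,
              max_eq_left (by linarith : (0:ℝ) ≤ v i - θ)]
            ring
          have hwabs : |w i| = v i - θ := by
            rw [hwv, abs_of_pos (by linarith : (0:ℝ) < v i - θ)]
          rw [hwabs, hwv]
          have h2 : θ * u i ≤ θ * |u i| :=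
            mul_le_mul_of_nonneg_left (le_abs_self _) hθ0
          nlinarith [h2]
      · push_neg at hc
        have hw0 : w i = 0 := by
          rw [hw i, max_eq_right (by linarith : |v i| - θ ≤ (0:ℝ))]
          ring
        have hwabs : |w i| = 0 := by rw [hw0, abs_zero]
        rw [hwabs, hw0]
        have h1 : (v i) * (u i) ≤ |v i| * |u i| := by
          rw [← abs_mul]; exact le_abs_self _
        have h2 : |v i| * |u i| ≤ θ * |u i| :=
          mul_le_mul_of_nonneg_right hc (abs_nonneg _)
        simp only [sub_zero]
        exact h1.trans h2
    have hVI : (∑ i, (v i - w i) * (u i - w i)) ≤ 0 := by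
      calc (∑ i, (v i - w i) * (u i - w i))
          ≤ ∑ i, θ * (|u i| - |w i|) := Finset.sum_le_sum fun i _ => hVIi i
        _ = θ * ((∑ i, |u i|) - (∑ i, |w i|)) := by
            simp only [mul_sub, Finset.mul_sum, Finset.sum_sub_distrib]
        _ = θ * ((∑ i, |u i|) - lam) := by rw [hsumw]
        _ ≤ 0 := mul_nonpos_of_nonneg_of_nonpos hθ0 (by linarith)
    have hid : (∑ i, (v i - u i) ^ 2)
        = (∑ i, (v i - w i) ^ 2) - 2 * (∑ i, (v i - w i) * (u i - w i))
          + (∑ i, (u i - w i) ^ 2) := by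
      rw [Finset.mul_sum, ← Finset.sum_sub_distrib, ← Finset.sum_add_distrib]
      exact Finset.sum_congr rfl fun i _ => by ring
    have hsq : (0:ℝ) ≤ ∑ i, (u i - w i) ^ 2 :=
      Finset.sum_nonneg fun i _ => sq_nonneg _
    first
    | linarith
    | {
      intro heq
      have hz : (∑ i, (u i - w i) ^ 2) = 0 := by linarith
      funext i
      have h0 := (Finset.sum_eq_zero_iff_of_nonneg
        (fun i _ => sq_nonneg (u i - w i))).mp hz i (mem_univ i)
      have := pow_eq_zero_iff (n := 2) (by norm_num) |>.mp h0
      linarith [sub_eq_zero.mp this]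
    }
  }
end

section
/- For matrices W ∈ ℝ^{p×p} with ρ(W ∘ W) < 1, the function h(W) = −log det(I − W ∘ W) satisfies h(W) = 0 if and only if the directed graph with edges {(j,k) : w_{jk} ≠ 0} is acyclic. -/
open Matrix Polynomial

namespace Stmt13Aux

noncomputable section

variable {p : ℕ}

lemma algebraMap_eq_scalar (p : ℕ) (y : ℂ) :
    algebraMap ℂ (Matrix (Fin p) (Fin p) ℂ) y = Matrix.scalar (Fin p) y := by
  ext i j
  simp [Matrix.algebraMap_matrix_apply, Matrix.scalar_apply, Matrix.diagonal_apply]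

lemma eval_charpoly (M : Matrix (Fin p) (Fin p) ℂ) (y : ℂ) :
    (M.charpoly).eval y = (Matrix.scalar (Fin p) y - M).det := by
  rw [Matrix.charpoly, _root_.eval_det, Matrix.matPolyEquiv_charmatrix]
  simp

lemma card_roots (M : Matrix (Fin p) (Fin p) ℂ) : M.charpoly.roots.card = p := by
  have h := (Polynomial.splits_iff_card_roots (f := M.charpoly)).mp
    (IsAlgClosed.splits _)
  rw [h, Matrix.charpoly_natDegree_eq_dim, Fintype.card_fin]

lemma charpoly_eq_prod (M : Matrix (Fin p) (Fin p) ℂ) :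
    M.charpoly = (M.charpoly.roots.map (fun a => X - C a)).prod :=
  Polynomial.Splits.eq_prod_roots_of_monic (IsAlgClosed.splits _) M.charpoly_monic

lemma eval_charpoly_eq_prod (M : Matrix (Fin p) (Fin p) ℂ) (y : ℂ) :
    (M.charpoly).eval y = (M.charpoly.roots.map (fun a => y - a)).prod := by
  conv_lhs => rw [charpoly_eq_prod M]
  rw [Polynomial.eval_multiset_prod, Multiset.map_map]
  simp [Function.comp]


lemma det_scalar_sub_smul (M : Matrix (Fin p) (Fin p) ℂ) (y c : ℂ) (hc : c ≠ 0) :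
    (Matrix.scalar (Fin p) y - c • M).det
      = (M.charpoly.roots.map (fun a => y - c * a)).prod := by
  have hmat : Matrix.scalar (Fin p) y - c • M
      = c • (Matrix.scalar (Fin p) (y / c) - M) := by
    rw [smul_sub]
    congr 1
    ext i j
    simp only [Matrix.smul_apply, Matrix.scalar_apply, Matrix.diagonal_apply]
    split_ifs <;> simp [mul_div_cancel₀ _ hc]
  have h1 : (Multiset.map (fun a => y - c * a) M.charpoly.roots)
      = Multiset.map (fun a => c * (y / c - a)) M.charpoly.roots :=
    Multiset.map_congr rfl (fun a _ => by field_simp)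
  rw [hmat, Matrix.det_smul, ← eval_charpoly, eval_charpoly_eq_prod, Fintype.card_fin, h1,
    Multiset.prod_map_mul, Multiset.map_const', Multiset.prod_replicate, card_roots M]

lemma prod_range_multiset_prod (m : ℕ) (R : Multiset ℂ) (f : ℕ → ℂ → ℂ) :
    ∏ k ∈ Finset.range m, (R.map (f k)).prod
      = (R.map (fun a => ∏ k ∈ Finset.range m, f k a)).prod := by
  induction R using Multiset.induction_on with
  | empty => simp
  | cons a s ih => simp [Finset.prod_mul_distrib, ih]

lemma finset_range_prod_eq_list {α : Type*} [CommMonoid α] (m : ℕ) (f : ℕ → α) :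
    ∏ k ∈ Finset.range m, f k = ((List.range m).map f).prod := by
  induction m with
  | zero => simp
  | succ n ih => rw [Finset.prod_range_succ, List.range_succ, List.map_append, List.prod_append,
      ih, List.map_singleton, List.prod_singleton]

lemma det_list_prod : ∀ l : List (Matrix (Fin p) (Fin p) ℂ),
    l.prod.det = (l.map Matrix.det).prod := by
  intro l
  induction l with
  | nil => simp
  | cons a t ih => simp [Matrix.det_mul, ih]

lemma roots_charpoly_pow (M : Matrix (Fin p) (Fin p) ℂ) (m : ℕ) (hm : 0 < m) :
    (M ^ m).charpoly.roots = M.charpoly.roots.map (fun a => a ^ m) := by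
  set ω : ℂ := Complex.exp (2 * Real.pi * Complex.I / m) with hωdef
  have hω : IsPrimitiveRoot ω m := Complex.isPrimitiveRoot_exp m hm.ne'
  have hωne : ∀ k : ℕ, ω ^ k ≠ 0 := fun k => pow_ne_zero k (Complex.exp_ne_zero _)
  have hscalar : ∀ z t : ℂ, ∏ k ∈ Finset.range m, (t - ω ^ k * z) = t ^ m - z ^ m := by
    intro z t
    have h := congrArg (Polynomial.eval t)
      (X_pow_sub_C_eq_prod hω hm (rfl : z ^ m = z ^ m))
    rw [eval_sub, eval_pow, eval_X, eval_C, eval_prod] at h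
    rw [h]
    exact Finset.prod_congr rfl fun k _ => by rw [eval_sub, eval_X, eval_C]
  have key : (M ^ m).charpoly
      = ((M.charpoly.roots.map (fun a => a ^ m)).map (fun a => X - C a)).prod := by
    apply Polynomial.funext
    intro x
    obtain ⟨y, hy⟩ := IsAlgClosed.exists_pow_nat_eq x hm
    have hpolyF : (C (y ^ m) - X ^ m : ℂ[X])
        = ∏ k ∈ Finset.range m, (C y - (ω ^ k) • (X : ℂ[X])) := by
      apply Polynomial.funext
      intro z
      rw [eval_sub, eval_C, eval_pow, eval_X, eval_prod, ← hscalar z y]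
      apply Finset.prod_congr rfl
      intro k _
      rw [eval_sub, eval_C, eval_smul, eval_X, smul_eq_mul]
    rw [finset_range_prod_eq_list] at hpolyF
    have hmat : (Matrix.scalar (Fin p) y) ^ m - M ^ m
        = ((List.range m).map
            (fun k => Matrix.scalar (Fin p) y - ω ^ k • M)).prod := by
      have h2 := congrArg (Polynomial.aeval M) hpolyF
      simp only [map_sub, Polynomial.aeval_C, algebraMap_eq_scalar, map_pow,
        Polynomial.aeval_X, map_list_prod, List.map_map] at h2
      rw [h2]
      congr 1
      apply List.map_congr_left
      intro k _
      simp only [Function.comp_apply, map_sub, Polynomial.aeval_C, algebraMap_eq_scalar]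
      rw [_root_.map_smul, Polynomial.aeval_X]
    have hdet : ((Matrix.scalar (Fin p) y) ^ m - M ^ m).det
        = ∏ k ∈ Finset.range m, (Matrix.scalar (Fin p) y - ω ^ k • M).det := by
      rw [hmat, det_list_prod, List.map_map, finset_range_prod_eq_list]
      rfl
    have lhs : ((M ^ m).charpoly).eval x
        = (M.charpoly.roots.map (fun a => x - a ^ m)).prod := by
      rw [← hy]
      rw [eval_charpoly, map_pow (Matrix.scalar (Fin p)) y m, hdet]
      calc ∏ k ∈ Finset.range m, (Matrix.scalar (Fin p) y - ω ^ k • M).det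
          = ∏ k ∈ Finset.range m,
              (M.charpoly.roots.map (fun a => y - ω ^ k * a)).prod :=
            Finset.prod_congr rfl fun k _ => det_scalar_sub_smul M y (ω ^ k) (hωne k)
        _ = (M.charpoly.roots.map
              (fun a => ∏ k ∈ Finset.range m, (y - ω ^ k * a))).prod :=
            prod_range_multiset_prod m _ _
        _ = (M.charpoly.roots.map (fun a => y ^ m - a ^ m)).prod := by
            refine congrArg Multiset.prod (Multiset.map_congr rfl ?_)
            intro a _
            exact hscalar a y
    rw [lhs, Polynomial.eval_multiset_prod, Multiset.map_map, Multiset.map_map]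
    apply congrArg
    apply Multiset.map_congr rfl
    intro a _
    simp
  rw [key, Polynomial.roots_multiset_prod_X_sub_C]

lemma trace_pow (M : Matrix (Fin p) (Fin p) ℂ) (m : ℕ) (hm : 0 < m) :
    (M ^ m).trace = (M.charpoly.roots.map (fun a => a ^ m)).sum := by
  rw [Matrix.trace_eq_sum_roots_charpoly, roots_charpoly_pow M m hm]

lemma det_one_sub (M : Matrix (Fin p) (Fin p) ℂ) :
    (1 - M).det = (M.charpoly.roots.map (fun a => 1 - a)).prod := by
  have h := eval_charpoly_eq_prod M 1
  rw [eval_charpoly] at h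
  have h1 : (Matrix.scalar (Fin p) (1 : ℂ)) = 1 := map_one _
  rw [h1] at h
  exact h

lemma root_mem_spectrum (M : Matrix (Fin p) (Fin p) ℂ) {a : ℂ}
    (ha : a ∈ M.charpoly.roots) : a ∈ spectrum ℂ M := by
  rw [spectrum.mem_iff, algebraMap_eq_scalar]
  intro h
  rw [Matrix.isUnit_iff_isUnit_det] at h
  have hdet : (Matrix.scalar (Fin p) a - M).det = 0 := by
    rw [← eval_charpoly]
    exact Polynomial.isRoot_of_mem_roots ha
  rw [hdet] at h
  simp at h

lemma hasSum_neg_log (a : ℂ) (ha : ‖a‖ < 1) :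
    HasSum (fun n : ℕ => a ^ n / n) (-Complex.log (1 - a)) := by
  have base := Complex.hasSum_taylorSeries_log (z := -a) (by simpa using ha)
  have heq : (fun n : ℕ => (-1 : ℂ) ^ (n + 1) * (-a) ^ n / n)
      = fun n : ℕ => -(a ^ n / n) := by
    funext n
    have h1 : (-1:ℂ) ^ (n + 1) * (-1:ℂ) ^ n = -1 := by
      rw [← pow_add, show n + 1 + n = 2 * n + 1 from by ring, pow_succ, pow_mul]
      norm_num
    calc (-1:ℂ) ^ (n + 1) * (-a) ^ n / n
        = ((-1:ℂ) ^ (n + 1) * (-1:ℂ) ^ n) * a ^ n / n := by rw [neg_pow a n]; ring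
      _ = -(a ^ n / n) := by rw [h1]; ring
  rw [heq, ← sub_eq_add_neg] at base
  simpa using base.neg

lemma hasSum_multiset_log (R : Multiset ℂ) (hR : ∀ a ∈ R, ‖a‖ < 1) :
    HasSum (fun n : ℕ => (R.map (fun a : ℂ => a ^ n / n)).sum)
      ((R.map (fun a => -Complex.log (1 - a))).sum) := by
  revert hR
  refine Multiset.induction_on R ?_ ?_
  · intro _
    simpa using (hasSum_zero : HasSum (fun _ : ℕ => (0 : ℂ)) 0)
  · intro a s ih hR
    simp only [Multiset.map_cons, Multiset.sum_cons]
    exact (hasSum_neg_log a (hR a (Multiset.mem_cons_self a s))).add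
      (ih fun b hb => hR b (Multiset.mem_cons_of_mem hb))

lemma log_multiset_prod (R : Multiset ℝ) (hR : ∀ x ∈ R, x ≠ 0) :
    Real.log R.prod = (R.map Real.log).sum := by
  revert hR
  refine Multiset.induction_on R ?_ ?_
  · intro _; simp
  · intro a s ih hR
    have hs : s.prod ≠ 0 :=
      Multiset.prod_ne_zero fun h0 => hR 0 (Multiset.mem_cons_of_mem h0) rfl
    rw [Multiset.prod_cons, Multiset.map_cons, Multiset.sum_cons,
      Real.log_mul (hR a (Multiset.mem_cons_self a s)) hs,
      ih fun b hb => hR b (Multiset.mem_cons_of_mem hb)]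

lemma abs_multiset_prod' (R : Multiset ℂ) :
    ‖R.prod‖ = (R.map (fun z : ℂ => ‖z‖)).prod := by
  refine Multiset.induction_on R (by simp) fun a s ih => ?_
  simp [norm_mul, ih]

lemma re_neg_log_sum (R : Multiset ℂ) :
    ((R.map (fun a => -Complex.log (1 - a))).sum).re
      = -((R.map (fun a => (Complex.log (1 - a)).re)).sum) := by
  refine Multiset.induction_on R (by simp) fun a s ih => ?_
  simp only [Multiset.map_cons, Multiset.sum_cons, Complex.add_re, Complex.neg_re, ih]
  ring

lemma pow_entry_nonneg (M : Matrix (Fin p) (Fin p) ℝ) (hM : ∀ i j, 0 ≤ M i j) (m : ℕ) :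
    ∀ i j, 0 ≤ (M ^ m) i j := by
  induction m with
  | zero =>
    intro i j
    rw [pow_zero, Matrix.one_apply]
    split_ifs <;> norm_num
  | succ m ih =>
    intro i j
    rw [pow_succ, Matrix.mul_apply]
    exact Finset.sum_nonneg fun k _ => mul_nonneg (ih i k) (hM k j)

lemma prod_le_pow_entry (M : Matrix (Fin p) (Fin p) ℝ) (hM : ∀ i j, 0 ≤ M i j)
    (f : ℕ → Fin p) (m : ℕ) :
    (∏ i ∈ Finset.range m, M (f i) (f (i + 1))) ≤ (M ^ m) (f 0) (f m) := by
  induction m with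
  | zero => simp [Matrix.one_apply]
  | succ m ih =>
    rw [Finset.prod_range_succ, pow_succ, Matrix.mul_apply]
    calc (∏ i ∈ Finset.range m, M (f i) (f (i + 1))) * M (f m) (f (m + 1))
        ≤ (M ^ m) (f 0) (f m) * M (f m) (f (m + 1)) :=
          mul_le_mul_of_nonneg_right ih (hM _ _)
      _ ≤ _ := Finset.single_le_sum
          (f := fun k => (M ^ m) (f 0) k * M k (f (m + 1)))
          (fun k _ => mul_nonneg (pow_entry_nonneg M hM m _ _) (hM _ _))
          (Finset.mem_univ (f m))

lemma exists_path (M : Matrix (Fin p) (Fin p) ℝ) :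
    ∀ m i j, (M ^ m) i j ≠ 0 →
      ∃ f : ℕ → Fin p, f 0 = i ∧ f m = j ∧ ∀ k < m, M (f k) (f (k + 1)) ≠ 0 := by
  intro m
  induction m with
  | zero =>
    intro i j h
    rw [pow_zero, Matrix.one_apply] at h
    have hij : i = j := by
      by_contra hne
      rw [if_neg hne] at h
      exact h rfl
    exact ⟨fun _ => i, rfl, hij ▸ rfl, fun k hk => absurd hk (Nat.not_lt_zero k)⟩
  | succ m ih =>
    intro i j h
    rw [pow_succ, Matrix.mul_apply] at h
    obtain ⟨k, -, hk⟩ := Finset.exists_ne_zero_of_sum_ne_zero h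
    obtain ⟨f, hf0, hfm, hf⟩ := ih i k (left_ne_zero_of_mul hk)
    refine ⟨fun t => if t ≤ m then f t else j, by simp [hf0], by simp, ?_⟩
    intro t ht
    rcases Nat.lt_or_ge t m with h1 | h1
    · have e1 : t ≤ m := h1.le
      have e2 : t + 1 ≤ m := h1
      simp only [if_pos e1, if_pos e2]
      exact hf t h1
    · have ht' : t = m := by omega
      subst ht'
      simp only [if_pos (le_refl t), if_neg (by omega : ¬ t + 1 ≤ t)]
      rw [hfm]
      exact right_ne_zero_of_mul hk

lemma trace_pos_of_cycle (M : Matrix (Fin p) (Fin p) ℝ) (hM : ∀ i j, 0 ≤ M i j)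
    (m : ℕ) (f : ℕ → Fin p) (hcyc : f m = f 0)
    (hne : ∀ i < m, M (f i) (f (i + 1)) ≠ 0) : 0 < (M ^ m).trace := by
  have h1 : 0 < ∏ i ∈ Finset.range m, M (f i) (f (i + 1)) :=
    Finset.prod_pos fun i hi =>
      lt_of_le_of_ne (hM _ _) (Ne.symm (hne i (Finset.mem_range.mp hi)))
  have h2 : 0 < (M ^ m) (f 0) (f 0) := by
    calc (0:ℝ) < ∏ i ∈ Finset.range m, M (f i) (f (i + 1)) := h1
      _ ≤ (M ^ m) (f 0) (f m) := prod_le_pow_entry M hM f m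
      _ = (M ^ m) (f 0) (f 0) := by rw [hcyc]
  calc (0:ℝ) < (M ^ m) (f 0) (f 0) := h2
    _ ≤ (M ^ m).trace := by
        rw [Matrix.trace]
        exact Finset.single_le_sum
          (f := fun i => (M ^ m) i i)
          (fun i _ => pow_entry_nonneg M hM m i i) (Finset.mem_univ (f 0))

lemma exists_cycle_of_trace (M : Matrix (Fin p) (Fin p) ℝ) (m : ℕ)
    (h : (M ^ m).trace ≠ 0) :
    ∃ f : ℕ → Fin p, f m = f 0 ∧ ∀ k < m, M (f k) (f (k + 1)) ≠ 0 := by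
  have hex : ∃ i, (M ^ m) i i ≠ 0 := by
    by_contra hc
    push_neg at hc
    apply h
    simp [Matrix.trace, Matrix.diag, hc]
  obtain ⟨i, hi⟩ := hex
  obtain ⟨f, hf0, hfm, hf⟩ := exists_path M m i i hi
  exact ⟨f, by rw [hfm, hf0], hf⟩

end

end Stmt13Aux

/-- DAGMA acyclicity characterization: for `W` with `ρ(W ∘ W) < 1`,
`h(W) = −log det(I − W ∘ W) = 0` iff the directed graph with edges
`{(j,k) : w_{jk} ≠ 0}` is acyclic. -/
theorem stmt_13 (p : ℕ) (W : Matrix (Fin p) (Fin p) ℝ)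
    (hρ : ∀ μ ∈ spectrum ℂ ((Matrix.hadamard W W).map (Complex.ofReal)),
      ‖μ‖ < 1) :
    -Real.log (1 - Matrix.hadamard W W).det = 0 ↔
      ¬∃ (m : ℕ) (f : ℕ → Fin p), 1 ≤ m ∧ f m = f 0 ∧
        ∀ i < m, W (f i) (f (i + 1)) ≠ 0 := by
  classical
  set A := Matrix.hadamard W W with hAdef
  set B := A.map Complex.ofReal with hBdef
  have hAnn : ∀ i j, 0 ≤ A i j := fun i j => by
    rw [hAdef, Matrix.hadamard_apply]; exact mul_self_nonneg _
  have hRnorm : ∀ a ∈ B.charpoly.roots, ‖a‖ < 1 := fun a ha =>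
    hρ a (Stmt13Aux.root_mem_spectrum B ha)
  have hone : ∀ a ∈ B.charpoly.roots, (1 : ℂ) - a ≠ 0 := by
    intro a ha h0
    have h1 : a = 1 := (sub_eq_zero.mp h0).symm
    have h2 := hRnorm a ha
    rw [h1] at h2
    norm_num at h2
  have hmap : ((1 - A).map Complex.ofReal) = 1 - B := by
    rw [hBdef]
    ext i j
    simp [Matrix.map_apply, Matrix.sub_apply, Matrix.one_apply, apply_ite Complex.ofReal]
  have hdetC : (Complex.ofReal ((1 - A).det))
      = ((B.charpoly.roots).map (fun a => 1 - a)).prod := by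
    have h1 := RingHom.map_det Complex.ofRealHom (1 - A)
    rw [← Stmt13Aux.det_one_sub, ← hmap]
    exact h1
  have habs : |(1 - A).det|
      = (((B.charpoly.roots).map (fun a => 1 - a)).map (fun z : ℂ => ‖z‖)).prod := by
    have h := congrArg (fun z : ℂ => ‖z‖) hdetC
    rw [Complex.norm_real, Real.norm_eq_abs] at h
    rw [h, Stmt13Aux.abs_multiset_prod']
  have hlog : Real.log ((1 - A).det)
      = ((B.charpoly.roots).map (fun a => (Complex.log (1 - a)).re)).sum := by
    rw [← Real.log_abs, habs, Stmt13Aux.log_multiset_prod, Multiset.map_map, Multiset.map_map]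
    · refine congrArg Multiset.sum (Multiset.map_congr rfl ?_)
      intro a ha
      simp only [Function.comp_apply]
      rw [Complex.log_re]
    · intro x hx
      rw [Multiset.mem_map] at hx
      obtain ⟨z, hz, rfl⟩ := hx
      rw [Multiset.mem_map] at hz
      obtain ⟨a, ha, rfl⟩ := hz
      intro h
      exact hone a ha (norm_eq_zero.mp h)
  have hsum := Stmt13Aux.hasSum_multiset_log B.charpoly.roots hRnorm
  have hre : HasSum
      (fun n : ℕ => (((B.charpoly.roots).map (fun a : ℂ => a ^ n / n)).sum).re)
      ((((B.charpoly.roots).map (fun a => -Complex.log (1 - a))).sum).re) :=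
    Complex.reCLM.hasSum hsum
  have hc : HasSum
      (fun n : ℕ => (((B.charpoly.roots).map (fun a : ℂ => a ^ n / n)).sum).re)
      (-Real.log ((1 - A).det)) := by
    rw [Stmt13Aux.re_neg_log_sum] at hre
    rw [hlog]
    exact hre
  have hterm : ∀ n : ℕ, 0 < n →
      (((B.charpoly.roots).map (fun a : ℂ => a ^ n / n)).sum).re
        = (A ^ n).trace / n := by
    intro n hn
    have hmm : ((B.charpoly.roots).map (fun a : ℂ => a ^ n / (n:ℂ))).sum
        = (B ^ n).trace / n := by
      rw [show (Multiset.map (fun a : ℂ => a ^ n / (n:ℂ)) B.charpoly.roots)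
          = Multiset.map (fun a : ℂ => a ^ n * ((n:ℂ))⁻¹) B.charpoly.roots from
        Multiset.map_congr rfl fun a _ => div_eq_mul_inv _ _]
      rw [Multiset.sum_map_mul_right, ← Stmt13Aux.trace_pow B n hn, div_eq_mul_inv]
    have hBpow : (B ^ n) = (A ^ n).map Complex.ofReal := by
      rw [hBdef]
      have h := map_pow (Complex.ofRealHom.mapMatrix (m := Fin p)) A n
      simp only [RingHom.mapMatrix_apply] at h
      exact h.symm
    have htr : (B ^ n).trace = Complex.ofReal ((A ^ n).trace) := by
      rw [hBpow]
      simp [Matrix.trace, Matrix.diag, Matrix.map_apply]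
    rw [hmm, htr]
    rw [show (Complex.ofReal ((A ^ n).trace)) / (n:ℂ)
        = Complex.ofReal ((A ^ n).trace / n) from by push_cast; ring]
    rw [Complex.ofReal_re]
  have hcnonneg : ∀ n : ℕ,
      0 ≤ (((B.charpoly.roots).map (fun a : ℂ => a ^ n / n)).sum).re := by
    intro n
    rcases Nat.eq_zero_or_pos n with rfl | hn
    · simp
    · rw [hterm n hn]
      apply div_nonneg _ (Nat.cast_nonneg n)
      rw [Matrix.trace]
      exact Finset.sum_nonneg fun i _ => Stmt13Aux.pow_entry_nonneg A hAnn n i i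
  have hiff : (∀ n : ℕ, 0 < n → (A ^ n).trace = 0) ↔
      ¬∃ (m : ℕ) (f : ℕ → Fin p), 1 ≤ m ∧ f m = f 0 ∧
        ∀ i < m, W (f i) (f (i + 1)) ≠ 0 := by
    constructor
    · rintro hall ⟨m, f, hm, hcyc, hne⟩
      have hAne : ∀ i < m, A (f i) (f (i + 1)) ≠ 0 := by
        intro i hi h0
        apply hne i hi
        rw [hAdef, Matrix.hadamard_apply] at h0
        exact mul_self_eq_zero.mp h0
      have hpos := Stmt13Aux.trace_pos_of_cycle A hAnn m f hcyc hAne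
      rw [hall m hm] at hpos
      exact lt_irrefl 0 hpos
    · intro hno n hn
      by_contra htr
      obtain ⟨f, hcyc, hf⟩ := Stmt13Aux.exists_cycle_of_trace A n htr
      refine hno ⟨n, f, hn, hcyc, fun i hi h0 => hf i hi ?_⟩
      rw [hAdef, Matrix.hadamard_apply, h0, mul_zero]
  constructor
  · intro h0
    rw [← hiff]
    intro n hn
    have hs0 : HasSum
        (fun n : ℕ => (((B.charpoly.roots).map (fun a : ℂ => a ^ n / n)).sum).re) 0 := by
      rwa [h0] at hc
    have hle := le_hasSum hs0 n fun j _ => hcnonneg j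
    have heq : (((B.charpoly.roots).map (fun a : ℂ => a ^ n / n)).sum).re = 0 :=
      le_antisymm hle (hcnonneg n)
    rw [hterm n hn] at heq
    have hn' : ((n:ℝ)) ≠ 0 := Nat.cast_ne_zero.mpr hn.ne'
    field_simp at heq
    simpa using heq
  · intro hno
    have hall := hiff.mpr hno
    have hzero : (fun n : ℕ =>
        (((B.charpoly.roots).map (fun a : ℂ => a ^ n / n)).sum).re)
        = fun _ => (0:ℝ) := by
      funext n
      rcases Nat.eq_zero_or_pos n with rfl | hn
      · simp
      · rw [hterm n hn, hall n hn, zero_div]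
    rw [hzero] at hc
    exact hc.unique hasSum_zero
end

section
/- In the setting of ℓ1-ball projection with binding constraint, differentiating the KKT system with respect to the data w̃ (holding the active set 𝒜 and signs fixed) gives, for i, q ∈ 𝒜: ∂w*_i/∂w̃_q = 𝟙[i = q] − sign(w*_q)·sign(w*_i)/|𝒜|, and ∂w*_i/∂w̃_q = 0 whenever i ∉ 𝒜. Consequently, the |𝒜|×|𝒜| Jacobian restricted to the active set equals I − s sᵀ/|𝒜| where s ∈ {±1}^{|𝒜|} is the sign vector, which is a symmetric projection matrix (idempotent) of rank |𝒜| − 1. -/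
open Finset Matrix

/-- The Jacobian matrix `I − s sᵀ/|𝒜|` restricted to the active set. -/
noncomputable def jacobianActive (n : ℕ) (A : Finset (Fin n)) (s : Fin n → ℝ) :
    Matrix A A ℝ :=
  1 - (A.card : ℝ)⁻¹ • Matrix.vecMulVec (fun i : A => s i) (fun i : A => s i)

/-- Sensitivity of the ℓ1-ball projection with respect to the data `w̃`:
with the active set `𝒜` and signs `s` held fixed, if `w(u)` and `ν(u)` satisfy
the KKT stationarity `w(u)_i = u_i − ν(u)·s_i` on `𝒜`, vanish off `𝒜`, and
satisfy the binding constraint `∑_{i∈𝒜} s_i w(u)_i = λ`, then for `i, q ∈ 𝒜`,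
`∂w_i/∂w̃_q = 𝟙[i = q] − s_q s_i/|𝒜|`, and `∂w_i/∂w̃_q = 0` for `i ∉ 𝒜`.
Moreover the Jacobian restricted to `𝒜`, namely `I − s sᵀ/|𝒜|`, is symmetric,
idempotent, and has rank `|𝒜| − 1`. -/
theorem stmt_17 (n : ℕ) (A : Finset (Fin n)) (hA : A.Nonempty)
    (s : Fin n → ℝ) (hs : ∀ i ∈ A, s i = 1 ∨ s i = -1) (lam : ℝ)
    (w : (Fin n → ℝ) → Fin n → ℝ) (ν : (Fin n → ℝ) → ℝ)
    (hstat : ∀ u : Fin n → ℝ, ∀ i ∈ A, w u i = u i - ν u * s i)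
    (hzero : ∀ u : Fin n → ℝ, ∀ i ∉ A, w u i = 0)
    (hbind : ∀ u : Fin n → ℝ, (∑ i ∈ A, s i * w u i) = lam)
    (u₀ : Fin n → ℝ) (hν : 0 < ν u₀) :
    (∀ i ∈ A, ∀ q ∈ A,
      HasDerivAt (fun t : ℝ => w (u₀ + t • (Pi.single q 1 : Fin n → ℝ)) i)
        ((if i = q then (1 : ℝ) else 0) - s q * s i / (A.card : ℝ)) 0) ∧
    (∀ i ∉ A, ∀ q : Fin n,
      HasDerivAt (fun t : ℝ => w (u₀ + t • (Pi.single q 1 : Fin n → ℝ)) i) 0 0) ∧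
    (jacobianActive n A s)ᵀ = jacobianActive n A s ∧
    jacobianActive n A s * jacobianActive n A s = jacobianActive n A s ∧
    (jacobianActive n A s).rank = A.card - 1 := by
  classical
  have hcard : (0 : ℕ) < A.card := hA.card_pos
  set m : ℝ := (A.card : ℝ) with hm
  have hm0 : m ≠ 0 := by
    rw [hm]; exact_mod_cast hcard.ne'
  have hs2 : ∀ i ∈ A, s i * s i = 1 := by
    intro i hi; rcases hs i hi with h | h <;> simp [h]
  -- explicit formula for ν
  have hνf : ∀ u : Fin n → ℝ, ν u = ((∑ i ∈ A, s i * u i) - lam) / m := by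
    intro u
    have h1 : (∑ i ∈ A, s i * w u i) = (∑ i ∈ A, s i * u i) - ν u * m := by
      have : ∀ i ∈ A, s i * w u i = s i * u i - ν u * (s i * s i) := by
        intro i hi; rw [hstat u i hi]; ring
      rw [Finset.sum_congr rfl this, Finset.sum_sub_distrib, ← Finset.mul_sum,
        Finset.sum_congr rfl hs2]
      simp [hm]
    have h2 := hbind u
    rw [h1] at h2
    field_simp
    linarith
  -- explicit formula for w on A
  have hwf : ∀ u : Fin n → ℝ, ∀ i ∈ A,
      w u i = u i - ((∑ j ∈ A, s j * u j) - lam) / m * s i := by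
    intro u i hi
    rw [hstat u i hi, hνf u]
  refine ⟨?_, ?_, ?_, ?_, ?_⟩
  · -- derivatives on the active set
    intro i hi q hq
    set S0 : ℝ := ∑ j ∈ A, s j * u₀ j with hS0
    have key : ∀ t : ℝ, w (u₀ + t • (Pi.single q 1 : Fin n → ℝ)) i =
        (u₀ i - (S0 - lam) / m * s i) +
          ((if i = q then (1 : ℝ) else 0) - s q * s i / m) * t := by
      intro t
      rw [hwf _ i hi]
      have hsum : (∑ j ∈ A, s j * (u₀ + t • (Pi.single q 1 : Fin n → ℝ)) j)
          = S0 + t * s q := by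
        have h1 : ∀ j ∈ A, s j * (u₀ + t • (Pi.single q 1 : Fin n → ℝ)) j
            = s j * u₀ j + (if j = q then t * s j else 0) := by
          intro j hj
          simp [Pi.single_apply]
          split <;> ring
        rw [Finset.sum_congr rfl h1, Finset.sum_add_distrib,
          Finset.sum_ite_eq' A q (fun j => t * s j), if_pos hq]
      rw [hsum]
      have : (u₀ + t • (Pi.single q 1 : Fin n → ℝ)) i
          = u₀ i + t * (if i = q then (1 : ℝ) else 0) := by
        simp [Pi.single_apply]
      rw [this]
      field_simp
      split_ifs <;> ring
    have : (fun t : ℝ => w (u₀ + t • (Pi.single q 1 : Fin n → ℝ)) i) =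
        fun t : ℝ => (u₀ i - (S0 - lam) / m * s i) +
          ((if i = q then (1 : ℝ) else 0) - s q * s i / m) * t := funext key
    rw [this]
    simpa using
      (((hasDerivAt_id (0 : ℝ)).const_mul
        ((if i = q then (1 : ℝ) else 0) - s q * s i / m)).const_add
        (u₀ i - (S0 - lam) / m * s i))
  · -- derivatives off the active set
    intro i hi q
    have : (fun t : ℝ => w (u₀ + t • (Pi.single q 1 : Fin n → ℝ)) i) =
        fun _ : ℝ => (0 : ℝ) := funext fun t => hzero _ i hi
    rw [this]
    exact hasDerivAt_const 0 0
  · -- symmetric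
    unfold jacobianActive
    rw [Matrix.transpose_sub, Matrix.transpose_one, Matrix.transpose_smul]
    congr 1
    ext i j
    simp [vecMulVec_apply, mul_comm]
  · -- idempotent
    unfold jacobianActive
    set v : A → ℝ := fun i : A => s i with hv
    set M := vecMulVec v v with hM
    have hMM : M * M = m • M := by
      ext i j
      have h1 : ∀ k : A, (v i * v k) * (v k * v j) = v i * v j := by
        intro k
        have h := hs2 (k : Fin n) k.2
        simp only [hv]
        linear_combination (s (i : Fin n) * s (j : Fin n)) * h
      simp only [hM, Matrix.mul_apply, vecMulVec_apply, Matrix.smul_apply, smul_eq_mul]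
      rw [Finset.sum_congr rfl fun k _ => h1 k]
      simp [hm, Finset.card_univ, mul_comm]
    have hcc : (m⁻¹ * m⁻¹) • (m • M) = m⁻¹ • M := by
      rw [smul_smul]
      congr 1
      field_simp
    calc (1 - m⁻¹ • M) * (1 - m⁻¹ • M)
        = 1 - m⁻¹ • M - m⁻¹ • M + (m⁻¹ * m⁻¹) • (M * M) := by
          simp only [Matrix.sub_mul, Matrix.mul_sub, Matrix.one_mul, Matrix.mul_one,
            Matrix.smul_mul, Matrix.mul_smul, smul_smul, smul_sub]
          abel
      _ = 1 - m⁻¹ • M := by rw [hMM, hcc]; abel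
  · -- rank
    set v : A → ℝ := fun i : A => s i with hv
    set M := vecMulVec v v with hM
    have hjac : jacobianActive n A s = 1 - m⁻¹ • M := rfl
    have hdot : v ⬝ᵥ v = m := by
      rw [dotProduct]
      rw [Finset.sum_congr rfl fun (k : A) _ => hs2 (k : Fin n) k.2]
      simp [hm, Finset.card_univ]
    have hvm : ∀ x : A → ℝ, M.mulVec x = (v ⬝ᵥ x) • v := by
      intro x; funext i
      simp only [hM, Matrix.mulVec, dotProduct, vecMulVec_apply, Pi.smul_apply,
        smul_eq_mul]
      rw [Finset.sum_mul]
      exact Finset.sum_congr rfl fun k _ => by ring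
    have hmv : ∀ x : A → ℝ, (jacobianActive n A s).mulVec x
        = x - (m⁻¹ * (v ⬝ᵥ x)) • v := by
      intro x
      rw [hjac, Matrix.sub_mulVec, Matrix.one_mulVec, Matrix.smul_mulVec, hvm,
        smul_smul]
    obtain ⟨a, ha⟩ := hA
    have hv0 : v ≠ 0 := by
      intro h
      have := congrFun h ⟨a, ha⟩
      simp only [hv, Pi.zero_apply] at this
      rcases hs a ha with h' | h' <;> rw [h'] at this <;> norm_num at this
    have hker : LinearMap.ker (jacobianActive n A s).mulVecLin = Submodule.span ℝ {v} := by
      ext x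
      rw [LinearMap.mem_ker, Matrix.mulVecLin_apply, Submodule.mem_span_singleton]
      constructor
      · intro h
        rw [hmv x] at h
        exact ⟨m⁻¹ * (v ⬝ᵥ x), (sub_eq_zero.mp h).symm⟩
      · rintro ⟨c, rfl⟩
        rw [hmv]
        rw [dotProduct_smul, hdot, smul_eq_mul, mul_comm c m, ← mul_assoc,
          inv_mul_cancel₀ hm0, one_mul, sub_self]
    have hrn := LinearMap.finrank_range_add_finrank_ker (jacobianActive n A s).mulVecLin
    rw [hker, finrank_span_singleton hv0] at hrn
    have hdom : Module.finrank ℝ (A → ℝ) = A.card := by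
      simp [Module.finrank_fintype_fun_eq_card, Fintype.card_coe]
    rw [hdom] at hrn
    have : (jacobianActive n A s).rank
        = Module.finrank ℝ (LinearMap.range (jacobianActive n A s).mulVecLin) := rfl
    rw [this]
    omega
end
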